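/- For every pair (m, n) of nonnegative integers with m ≠ 0, m ≠ 1, m dividing n² + 1 and (m,n) ≠ (1,0): exactly one of the inequalities n ≥ m and n ≥ (n² + 1)/m holds; equivalently min{m, (n²+1)/m} ≤ n < max{m, (n²+1)/m}. -/
import Mathlib


theorem phi0_enumerable_condition (m n : ℕ) (hm0 : m ≠ 0) (hm1 : m ≠ 1)
    (hdvd : m ∣ n^2 + 1) (hne : (m, n) ≠ (1, 0)) :
    Xor' (m ≤ n) ((n^2 + 1)/m ≤ n) ∧
      (min m ((n^2 + 1)/m) ≤ n ∧ n < max m ((n^2 + 1)/m)) := by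
  set k := (n^2 + 1) / m with hk
  have hmk : m * k = n^2 + 1 := Nat.mul_div_cancel' hdvd
  have hnb : ¬ (m ≤ n ∧ k ≤ n) := by
    rintro ⟨h1, h2⟩
    have : m * k ≤ n * n := Nat.mul_le_mul h1 h2
    rw [hmk] at this; nlinarith
  have hor : m ≤ n ∨ k ≤ n := by
    by_contra h
    push_neg at h
    obtain ⟨h1, h2⟩ := h
    have : (n+1) * (n+1) ≤ m * k := Nat.mul_le_mul h1 h2
    rw [hmk] at this
    have hn0 : n = 0 := by nlinarith
    subst hn0
    simp only [pow_two, mul_zero, zero_add] at hmk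
    exact hm1 (Nat.eq_one_of_mul_eq_one_right hmk)
  have hxor : Xor' (m ≤ n) (k ≤ n) := by
    rcases hor with h | h
    · exact Or.inl ⟨h, fun h2 => hnb ⟨h, h2⟩⟩
    · exact Or.inr ⟨h, fun h2 => hnb ⟨h2, h⟩⟩
  refine ⟨hxor, ?_, ?_⟩
  · rcases hor with h | h
    · exact le_trans (min_le_left _ _) h
    · exact le_trans (min_le_right _ _) h
  · rcases hxor with ⟨h1, h2⟩ | ⟨h1, h2⟩
    · exact lt_of_lt_of_le (Nat.lt_of_not_le h2) (le_max_right _ _)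
    · exact lt_of_lt_of_le (Nat.lt_of_not_le h2) (le_max_left _ _)
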